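/- There exists a constant C > 0 depending only on M, ā and T such that the following holds. On the Shishkin mesh (with ρ = min(T/2, ā⁻¹ ε ln N)), let g ∈ C²([0,T]) satisfy |g''(τ)| ≤ M(1 + ε⁻² e^{−ā τ/ε}) for all τ ∈ [0,T]. Then |½ Σ_{j=1}^{N} ∫_{ξ_{j−1}}^{ξ_j} (τ − ξ_j)(τ − ξ_{j−1}) g''(τ) dτ| ≤ C N⁻² ln N. -/

import Mathlib

/-- Shishkin transition point `ρ = min(T/2, ā⁻¹ ε ln N)`. -/
noncomputable def sRho (T abar ε : ℝ) (N : ℕ) : ℝ :=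
  min (T / 2) (abar⁻¹ * ε * Real.log N)

/-- Fine step size `h⁽¹⁾ = 2ρ/N`. -/
noncomputable def sH1 (T abar ε : ℝ) (N : ℕ) : ℝ := 2 * sRho T abar ε N / N

/-- Coarse step size `h⁽²⁾ = 2(T−ρ)/N`. -/
noncomputable def sH2 (T abar ε : ℝ) (N : ℕ) : ℝ :=
  2 * (T - sRho T abar ε N) / N

/-- Shishkin mesh points `ξ_i`. -/
noncomputable def sXi (T abar ε : ℝ) (N i : ℕ) : ℝ :=
  if i ≤ N / 2 then (i : ℝ) * sH1 T abar ε N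
  else sRho T abar ε N + ((i : ℝ) - (N : ℝ) / 2) * sH2 T abar ε N

lemma cont_exp_c (c : ℝ) : Continuous (fun τ : ℝ => Real.exp (-(c*τ))) :=
  Real.continuous_exp.comp ((continuous_const.mul continuous_id).neg)

lemma exp_int (c a b : ℝ) (hc : 0 < c) :
    (∫ τ in a..b, Real.exp (-(c*τ)))
      = c⁻¹ * (Real.exp (-(c*a)) - Real.exp (-(c*b))) := by
  have h : ∀ x ∈ Set.uIcc a b, HasDerivAt (fun τ => -c⁻¹ * Real.exp (-(c*τ))) (Real.exp (-(c*x))) x := by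
    intro x _
    have h1 : HasDerivAt (fun τ : ℝ => -(c*τ)) (-c) x := by
      exact ((hasDerivAt_id x).const_mul c).neg.congr_deriv (by simp)
    have h2 := (Real.hasDerivAt_exp (-(c*x))).comp x h1
    have h3 := h2.const_mul (-c⁻¹)
    refine h3.congr_deriv ?_
    field_simp
  rw [intervalIntegral.integral_eq_sub_of_hasDerivAt h
    (by apply Continuous.intervalIntegrable; exact cont_exp_c c)]
  ring

lemma lin_exp_int_le (c a b : ℝ) (hc : 0 < c) (hab : a ≤ b) :
    (∫ τ in a..b, (τ - a) * Real.exp (-(c*τ)))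
      ≤ c⁻¹ * c⁻¹ * (Real.exp (-(c*a)) - Real.exp (-(c*b))) := by
  have h : ∀ x ∈ Set.uIcc a b, HasDerivAt
      (fun τ => -(τ-a) * c⁻¹ * Real.exp (-(c*τ)) - c⁻¹ * c⁻¹ * Real.exp (-(c*τ)))
      ((x - a) * Real.exp (-(c*x))) x := by
    intro x _
    have h1 : HasDerivAt (fun τ : ℝ => -(c*τ)) (-c) x := by
      exact ((hasDerivAt_id x).const_mul c).neg.congr_deriv (by simp)
    have he : HasDerivAt (fun τ : ℝ => Real.exp (-(c*τ))) (-c * Real.exp (-(c*x))) x := by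
      exact (show HasDerivAt (fun τ : ℝ => Real.exp (-(c*τ))) (Real.exp (-(c*x)) * -c) x from by have h2 := (Real.hasDerivAt_exp (-(c*x))).comp x h1; exact h2).congr_deriv (by ring)
    have hl : HasDerivAt (fun τ : ℝ => -(τ-a) * c⁻¹) (-c⁻¹) x := by
      simpa using (((hasDerivAt_id x).sub_const a).neg).mul_const c⁻¹
    have := (hl.mul he).sub (he.const_mul (c⁻¹ * c⁻¹))
    refine this.congr_deriv ?_
    field_simp
    ring
  rw [intervalIntegral.integral_eq_sub_of_hasDerivAt h
    (by apply Continuous.intervalIntegrable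
        exact ((continuous_id.sub continuous_const).mul (cont_exp_c c)))]
  have hba : (0:ℝ) ≤ b - a := by linarith
  have h1 : 0 ≤ (b - a) * c⁻¹ * Real.exp (-(c*b)) := by positivity
  nlinarith [Real.exp_pos (-(c*b)), Real.exp_pos (-(c*a))]

lemma lin_exp_int_le' (c a b : ℝ) (hc : 0 < c) (hab : a ≤ b) :
    (∫ τ in a..b, (τ - a) * Real.exp (-(c*τ)))
      ≤ (b - a) * c⁻¹ * (Real.exp (-(c*a)) - Real.exp (-(c*b))) := by
  have hmono : (∫ τ in a..b, (τ - a) * Real.exp (-(c*τ)))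
      ≤ ∫ τ in a..b, (b - a) * Real.exp (-(c*τ)) := by
    apply intervalIntegral.integral_mono_on hab
    · apply Continuous.intervalIntegrable
      exact ((continuous_id.sub continuous_const).mul (cont_exp_c c))
    · apply Continuous.intervalIntegrable
      exact (continuous_const.mul (cont_exp_c c))
    · intro x hx
      have := Real.exp_pos (-(c*x))
      nlinarith [hx.1, hx.2]
  calc (∫ τ in a..b, (τ - a) * Real.exp (-(c*τ)))
      ≤ ∫ τ in a..b, (b - a) * Real.exp (-(c*τ)) := hmono
    _ = (b - a) * ∫ τ in a..b, Real.exp (-(c*τ)) := by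
        rw [intervalIntegral.integral_const_mul]
    _ = (b - a) * (c⁻¹ * (Real.exp (-(c*a)) - Real.exp (-(c*b)))) := by
        rw [exp_int c a b hc]
    _ = (b - a) * c⁻¹ * (Real.exp (-(c*a)) - Real.exp (-(c*b))) := by ring

lemma cell_est (M K c β a b : ℝ) (f : ℝ → ℝ) (hM : 0 ≤ M) (hK : 0 ≤ K)
    (hab : a ≤ b) (hf : ContinuousOn f (Set.Icc a b))
    (hfb : ∀ τ ∈ Set.Icc a b, |f τ| ≤ M + K * Real.exp (-(c*τ)))
    (hβ : (∫ τ in a..b, (τ - a) * Real.exp (-(c*τ)))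
        ≤ β * (Real.exp (-(c*a)) - Real.exp (-(c*b)))) :
    |∫ τ in a..b, (τ - b) * (τ - a) * f τ|
      ≤ (b-a) * (M * (b-a)^2 + K * β * (Real.exp (-(c*a)) - Real.exp (-(c*b)))) := by
  have huIcc : Set.uIcc a b = Set.Icc a b := Set.uIcc_of_le hab
  have hba : (0:ℝ) ≤ b - a := by linarith
  have hfi : IntervalIntegrable (fun τ => (τ - b) * (τ - a) * f τ) MeasureTheory.volume a b := by
    apply ContinuousOn.intervalIntegrable
    rw [huIcc]
    exact (((continuousOn_id.sub continuousOn_const).mul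
      (continuousOn_id.sub continuousOn_const)).mul hf)
  have habs : |∫ τ in a..b, (τ - b) * (τ - a) * f τ|
      ≤ ∫ τ in a..b, |τ - b| * |τ - a| * |f τ| := by
    simpa [Real.norm_eq_abs, abs_mul] using
      intervalIntegral.norm_integral_le_integral_norm
        (μ := MeasureTheory.volume) (f := fun τ => (τ - b) * (τ - a) * f τ) hab
  have hpt : ∀ τ ∈ Set.Icc a b, |τ - b| * |τ - a| * |f τ|
      ≤ (b - a) * M * (τ - a) + (b - a) * K * ((τ - a) * Real.exp (-(c*τ))) := by
    intro τ hτ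
    have h2 : |τ - b| ≤ b - a := by
      rw [abs_sub_comm, abs_of_nonneg (by linarith [hτ.2])]; linarith [hτ.1]
    have h3 : |τ - a| = τ - a := abs_of_nonneg (by linarith [hτ.1])
    have h4 := hfb τ hτ
    have h5 : 0 ≤ τ - a := by linarith [hτ.1]
    have habs0 : (0:ℝ) ≤ |f τ| := abs_nonneg _
    rw [h3]
    calc |τ - b| * (τ - a) * |f τ| ≤ (b - a) * (τ - a) * |f τ| :=
          mul_le_mul_of_nonneg_right (mul_le_mul_of_nonneg_right h2 h5) habs0
      _ ≤ (b - a) * (τ - a) * (M + K * Real.exp (-(c*τ))) :=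
          mul_le_mul_of_nonneg_left h4 (by positivity)
      _ = (b - a) * M * (τ - a) + (b - a) * K * ((τ - a) * Real.exp (-(c*τ))) := by ring
  have hInt2 : IntervalIntegrable
      (fun τ => (b - a) * M * (τ - a) + (b - a) * K * ((τ - a) * Real.exp (-(c*τ))))
      MeasureTheory.volume a b := by
    apply Continuous.intervalIntegrable
    exact (continuous_const.mul (continuous_id.sub continuous_const)).add
      (continuous_const.mul ((continuous_id.sub continuous_const).mul (cont_exp_c c)))
  have hInt1 : IntervalIntegrable (fun τ => |τ - b| * |τ - a| * |f τ|) MeasureTheory.volume a b := by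
    have := hfi.abs
    simpa [abs_mul] using this
  have hmono := intervalIntegral.integral_mono_on hab hInt1 hInt2 hpt
  have hsplit : (∫ τ in a..b, ((b - a) * M * (τ - a) + (b - a) * K * ((τ - a) * Real.exp (-(c*τ)))))
      = (b - a) * M * (∫ τ in a..b, (τ - a)) + (b - a) * K * (∫ τ in a..b, (τ - a) * Real.exp (-(c*τ))) := by
    rw [intervalIntegral.integral_add, intervalIntegral.integral_const_mul,
      intervalIntegral.integral_const_mul]
    · apply Continuous.intervalIntegrable
      exact continuous_const.mul (continuous_id.sub continuous_const)
    · apply Continuous.intervalIntegrable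
      exact continuous_const.mul ((continuous_id.sub continuous_const).mul (cont_exp_c c))
  have hlin : (∫ τ in a..b, (τ - a)) ≤ (b - a)^2 := by
    have hval : (∫ τ in a..b, (τ - a)) = (b-a)^2/2 := by
      rw [intervalIntegral.integral_sub
        (by apply Continuous.intervalIntegrable; exact continuous_id)
        (by apply Continuous.intervalIntegrable; exact continuous_const),
        integral_id, intervalIntegral.integral_const, smul_eq_mul]
      ring
    rw [hval]; nlinarith
  have hKβ : (b - a) * K * (∫ τ in a..b, (τ - a) * Real.exp (-(c*τ)))
      ≤ (b - a) * K * (β * (Real.exp (-(c*a)) - Real.exp (-(c*b)))) := by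
    apply mul_le_mul_of_nonneg_left hβ
    positivity
  have hM2 : (b - a) * M * (∫ τ in a..b, (τ - a)) ≤ (b - a) * M * (b - a)^2 := by
    apply mul_le_mul_of_nonneg_left hlin; positivity
  calc |∫ τ in a..b, (τ - b) * (τ - a) * f τ|
      ≤ ∫ τ in a..b, |τ - b| * |τ - a| * |f τ| := habs
    _ ≤ _ := hmono
    _ = (b - a) * M * (∫ τ in a..b, (τ - a)) + (b - a) * K * (∫ τ in a..b, (τ - a) * Real.exp (-(c*τ))) := hsplit
    _ ≤ (b - a) * M * (b - a)^2 + (b - a) * K * (β * (Real.exp (-(c*a)) - Real.exp (-(c*b)))) := by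
        linarith
    _ = (b-a) * (M * (b-a)^2 + K * β * (Real.exp (-(c*a)) - Real.exp (-(c*b)))) := by ring

lemma half_cast {N : ℕ} (hNe : Even N) : ((N/2 : ℕ) : ℝ) = (N:ℝ)/2 := by
  obtain ⟨r, hr⟩ := hNe
  subst hr
  have : (r + r) / 2 = r := by omega
  rw [this]; push_cast; ring

lemma sXi_fine (T abar ε : ℝ) {N k : ℕ} (hk : k ≤ N/2) :
    sXi T abar ε N k = (k : ℝ) * sH1 T abar ε N := if_pos hk

lemma sXi_coarse (T abar ε : ℝ) {N k : ℕ} (hN : 4 ≤ N) (hNe : Even N) (hk : N/2 ≤ k) :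
    sXi T abar ε N k = sRho T abar ε N + ((k:ℝ) - (N:ℝ)/2) * sH2 T abar ε N := by
  rcases eq_or_lt_of_le hk with h | h
  · rw [← h, sXi_fine T abar ε le_rfl, half_cast hNe, sH1]
    have h0 : (N:ℝ) ≠ 0 := by positivity
    field_simp
    ring
  · rw [sXi, if_neg (by omega)]

set_option maxHeartbeats 1000000 in
/-- trapezoidal remainder bound
`|½ Σ_{j=1}^{N} ∫_{ξ_{j−1}}^{ξ_j} (τ−ξ_j)(τ−ξ_{j−1}) g'' dτ| ≤ C N⁻² ln N`
on the Shishkin mesh, for `g ∈ C²([0,T])` with `|g''(τ)| ≤ M(1 + ε⁻² e^{−ā τ/ε})`. -/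
theorem trapezoid_remainder_layer_bound
    (M abar T : ℝ) (hM : 0 < M) (habar : 0 < abar) (hT : 0 < T) :
    ∃ C : ℝ, 0 < C ∧ ∀ (ε : ℝ) (N : ℕ), 0 < ε → ε ≤ 1 → 4 ≤ N → Even N →
      ∀ g g' g'' : ℝ → ℝ,
        (∀ τ ∈ Set.Icc 0 T, HasDerivWithinAt g (g' τ) (Set.Icc 0 T) τ) →
        (∀ τ ∈ Set.Icc 0 T, HasDerivWithinAt g' (g'' τ) (Set.Icc 0 T) τ) →
        ContinuousOn g'' (Set.Icc 0 T) →
        (∀ τ ∈ Set.Icc 0 T,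
          |g'' τ| ≤ M * (1 + (ε ^ 2)⁻¹ * Real.exp (-(abar * τ) / ε))) →
        |(1 / 2) * ∑ j ∈ Finset.Icc 1 N,
            ∫ τ in sXi T abar ε N (j - 1)..sXi T abar ε N j,
              (τ - sXi T abar ε N j) * (τ - sXi T abar ε N (j - 1)) * g'' τ|
          ≤ C * ((N : ℝ) ^ 2)⁻¹ * Real.log N := by
  refine ⟨M * (5*T^3 + 10*T/abar^2) + 1, by positivity, ?_⟩
  intro ε N hε hε1 hN hNe g g' g'' hg hg' hg''c hbound
  clear hg hg'
  obtain ⟨m, hNm⟩ := hNe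
  have hNe : Even N := ⟨m, hNm⟩
  have hm2 : 2 ≤ m := by omega
  have hNd : N / 2 = m := by omega
  have hmR : (2:ℝ) ≤ (m:ℝ) := by exact_mod_cast hm2
  have hNR : (N:ℝ) = 2*m := by rw [hNm]; push_cast; ring
  have hNpos : (0:ℝ) < N := by rw [hNR]; linarith only [hmR]
  have hN1 : (1:ℝ) < N := by rw [hNR]; linarith only [hmR]
  have hL : 0 < Real.log N := Real.log_pos hN1
  have hL1 : 1 ≤ Real.log N := by
    rw [Real.le_log_iff_exp_le hNpos]
    have h4 : (4:ℝ) ≤ N := by exact_mod_cast hN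
    nlinarith [Real.exp_one_lt_d9]
  set L := Real.log N with hLdef
  set ρ := sRho T abar ε N with hρdef
  have hρpos : 0 < ρ := lt_min (by linarith only [hT]) (by positivity)
  have hρT2 : ρ ≤ T/2 := min_le_left _ _
  have hρlog : ρ ≤ abar⁻¹ * ε * L := min_le_right _ _
  set h1 := sH1 T abar ε N with hh1d
  set h2 := sH2 T abar ε N with hh2d
  have hh1 : h1 = 2*ρ/N := rfl
  have hh2 : h2 = 2*(T-ρ)/N := rfl
  have hh1nn : 0 ≤ h1 := by rw [hh1]; positivity
  have hh1leTN : h1 ≤ T/(N:ℝ) := by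
    rw [hh1]; gcongr; linarith only [hρT2]
  have hh1leL : h1 ≤ 2*(abar⁻¹*ε*L)/(N:ℝ) := by
    rw [hh1]; gcongr
  have hh2pos : 0 < h2 := by
    rw [hh2]; apply div_pos; linarith only [hρT2, hT]; exact hNpos
  have hh2le : h2 ≤ 2*T/(N:ℝ) := by
    rw [hh2]; gcongr; linarith only [hρpos]
  set c := abar/ε with hcdef
  have hcpos : 0 < c := div_pos habar hε
  set K := M * (ε^2)⁻¹ with hKdef
  have hKnn : 0 ≤ K := by positivity
  set x := sXi T abar ε N with hxdef
  set E := fun k : ℕ => Real.exp (-(c * x k)) with hEdef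
  have hEk : ∀ k, Real.exp (-(c * x k)) = E k := fun k => rfl
  -- mesh facts
  have hxfine : ∀ k, k ≤ m → x k = (k:ℝ) * h1 := fun k hk =>
    sXi_fine T abar ε (by omega)
  have hxcoarse : ∀ k, m ≤ k → x k = ρ + ((k:ℝ) - (N:ℝ)/2) * h2 := fun k hk =>
    sXi_coarse T abar ε hN hNe (by omega)
  have hx0 : x 0 = 0 := by rw [hxfine 0 (by omega)]; simp
  have hmh1 : (m:ℝ) * h1 = ρ := by
    rw [hh1, hNR]
    have hm0 : (m:ℝ) ≠ 0 := by linarith only [hmR]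
    field_simp
  have hmh2 : (m:ℝ) * h2 = T - ρ := by
    rw [hh2, hNR]
    have hm0 : (m:ℝ) ≠ 0 := by linarith only [hmR]
    field_simp
  have hxm : x m = ρ := by
    rw [hxcoarse m le_rfl, hNR]
    ring_nf
  have hxN : x N = T := by
    rw [hxcoarse N (by omega)]
    have he : ((N:ℝ) - (N:ℝ)/2) = (m:ℝ) := by rw [hNR]; ring
    rw [he, hmh2]; ring
  have hstep1 : ∀ k, k < m → x (k+1) - x k = h1 := by
    intro k hk
    rw [hxfine (k+1) (by omega), hxfine k (by omega)]
    push_cast; ring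
  have hstep2 : ∀ k, m ≤ k → x (k+1) - x k = h2 := by
    intro k hk
    rw [hxcoarse (k+1) (by omega), hxcoarse k hk]
    push_cast; ring
  have hxmono : ∀ k, x k ≤ x (k+1) := by
    intro k
    rcases lt_or_ge k m with h | h
    · have := hstep1 k h; linarith only [this, hh1nn]
    · have := hstep2 k h; linarith only [this, hh2pos]
  have hxnn : ∀ k, 0 ≤ x k := by
    intro k
    rcases le_or_gt k m with h | h
    · rw [hxfine k h]; positivity
    · rw [hxcoarse k h.le]
      have h1' : (0:ℝ) ≤ ((k:ℝ) - (N:ℝ)/2) := by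
        rw [hNR]
        have : (m:ℝ) ≤ (k:ℝ) := by exact_mod_cast h.le
        linarith only [this, hρpos]
      have := mul_nonneg h1' hh2pos.le
      linarith only [this, hρpos]
  have hxleT : ∀ k, k ≤ N → x k ≤ T := by
    intro k hk
    rcases le_or_gt k m with h | h
    · rw [hxfine k h]
      have hkm : (k:ℝ) ≤ (m:ℝ) := by exact_mod_cast h
      have := mul_le_mul_of_nonneg_right hkm hh1nn
      rw [hmh1] at this
      linarith only [this, hρT2, hT]
    · rw [hxcoarse k h.le]
      have hkN : (k:ℝ) ≤ (N:ℝ) := by exact_mod_cast hk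
      have he : ((k:ℝ) - (N:ℝ)/2) ≤ (m:ℝ) := by rw [hNR]; linarith only [hkN, hNR]
      have := mul_le_mul_of_nonneg_right he hh2pos.le
      rw [hmh2] at this
      linarith only [this]
  have hEnn : ∀ k, 0 ≤ E k := fun k => (Real.exp_pos _).le
  have hEmono : ∀ k, E (k+1) ≤ E k := by
    intro k
    apply Real.exp_le_exp.mpr
    have h' := mul_le_mul_of_nonneg_left (hxmono k) hcpos.le
    linarith only [h']
  -- the per-cell estimate
  have hcell : ∀ k, k < N → ∀ β : ℝ,
      ((∫ τ in x k..x (k+1), (τ - x k) * Real.exp (-(c*τ)))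
        ≤ β * (E k - E (k+1))) →
      |∫ τ in x k..x (k+1), (τ - x (k+1)) * (τ - x k) * g'' τ|
        ≤ (x (k+1) - x k) * (M*(x (k+1) - x k)^2 + K*β*(E k - E (k+1))) := by
    intro k hk β hβ
    have hsub : Set.Icc (x k) (x (k+1)) ⊆ Set.Icc 0 T := by
      apply Set.Icc_subset_Icc (hxnn k) (hxleT (k+1) (by omega))
    have hfb : ∀ τ ∈ Set.Icc (x k) (x (k+1)), |g'' τ| ≤ M + K * Real.exp (-(c*τ)) := by
      intro τ hτ
      have hb := hbound τ (hsub hτ)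
      calc |g'' τ| ≤ M * (1 + (ε ^ 2)⁻¹ * Real.exp (-(abar * τ) / ε)) := hb
        _ = M + K * Real.exp (-(c*τ)) := by
            rw [hKdef, hcdef, show -(abar*τ)/ε = -(abar/ε*τ) by ring]
            ring
    exact cell_est M K c β (x k) (x (k+1)) g'' hM.le hKnn (hxmono k)
      (hg''c.mono hsub) hfb hβ
  -- per-cell bounds for fine and coarse regions
  set β2 := min (c⁻¹*c⁻¹) (h2*c⁻¹) with hβ2def
  have hβ2nn : 0 ≤ β2 := le_min (by positivity) (by positivity)
  have hfineCell : ∀ k ∈ Finset.range m,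
      |∫ τ in x k..x (k+1), (τ - x (k+1)) * (τ - x k) * g'' τ|
        ≤ h1*(M*h1^2) + h1*(K*(h1*c⁻¹))*(E k - E (k+1)) := by
    intro k hk
    rw [Finset.mem_range] at hk
    have hstep := hstep1 k hk
    have hβ : (∫ τ in x k..x (k+1), (τ - x k) * Real.exp (-(c*τ)))
        ≤ (h1*c⁻¹) * (E k - E (k+1)) := by
      have h := lin_exp_int_le' c (x k) (x (k+1)) hcpos (hxmono k)
      rw [hstep] at h
      exact h
    have h := hcell k (by omega) (h1*c⁻¹) hβ
    rw [hstep] at h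
    calc _ ≤ h1 * (M*h1^2 + K*(h1*c⁻¹)*(E k - E (k+1))) := h
      _ = h1*(M*h1^2) + h1*(K*(h1*c⁻¹))*(E k - E (k+1)) := by ring
  have hcoarseCell : ∀ k ∈ Finset.Ico m N,
      |∫ τ in x k..x (k+1), (τ - x (k+1)) * (τ - x k) * g'' τ|
        ≤ h2*(M*h2^2) + h2*(K*β2)*(E k - E (k+1)) := by
    intro k hk
    rw [Finset.mem_Ico] at hk
    have hstep := hstep2 k hk.1
    have hβ : (∫ τ in x k..x (k+1), (τ - x k) * Real.exp (-(c*τ)))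
        ≤ β2 * (E k - E (k+1)) := by
      rcases le_total (c⁻¹*c⁻¹) (h2*c⁻¹) with hmn | hmn
      · rw [hβ2def, min_eq_left hmn]
        exact lin_exp_int_le c (x k) (x (k+1)) hcpos (hxmono k)
      · rw [hβ2def, min_eq_right hmn]
        have h := lin_exp_int_le' c (x k) (x (k+1)) hcpos (hxmono k)
        rw [hstep] at h
        exact h
    have h := hcell k (by omega) β2 hβ
    rw [hstep] at h
    calc _ ≤ h2 * (M*h2^2 + K*β2*(E k - E (k+1))) := h
      _ = h2*(M*h2^2) + h2*(K*β2)*(E k - E (k+1)) := by ring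
  -- telescoping sums
  have htel1 : ∑ k ∈ Finset.range m, (E k - E (k+1)) = E 0 - E m :=
    Finset.sum_range_sub' E m
  have htel2 : ∑ k ∈ Finset.Ico m N, (E k - E (k+1)) = E m - E N := by
    rw [Finset.sum_Ico_eq_sum_range]
    have h := Finset.sum_range_sub' (fun i => E (m + i)) (N - m)
    have hmn : m + (N - m) = N := by omega
    rw [hmn] at h
    exact h
  have hfineSum : ∑ k ∈ Finset.range m,
      |∫ τ in x k..x (k+1), (τ - x (k+1)) * (τ - x k) * g'' τ|
      ≤ (m:ℝ)*(h1*(M*h1^2)) + h1*(K*(h1*c⁻¹))*(E 0 - E m) := by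
    calc _ ≤ ∑ k ∈ Finset.range m, (h1*(M*h1^2) + h1*(K*(h1*c⁻¹))*(E k - E (k+1))) :=
        Finset.sum_le_sum hfineCell
      _ = (m:ℝ)*(h1*(M*h1^2)) + h1*(K*(h1*c⁻¹))*(E 0 - E m) := by
        rw [Finset.sum_add_distrib, Finset.sum_const, ← Finset.mul_sum, htel1,
          Finset.card_range, nsmul_eq_mul]
  have hcoarseSum : ∑ k ∈ Finset.Ico m N,
      |∫ τ in x k..x (k+1), (τ - x (k+1)) * (τ - x k) * g'' τ|
      ≤ (m:ℝ)*(h2*(M*h2^2)) + h2*(K*β2)*(E m - E N) := by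
    calc _ ≤ ∑ k ∈ Finset.Ico m N, (h2*(M*h2^2) + h2*(K*β2)*(E k - E (k+1))) :=
        Finset.sum_le_sum hcoarseCell
      _ = (m:ℝ)*(h2*(M*h2^2)) + h2*(K*β2)*(E m - E N) := by
        rw [Finset.sum_add_distrib, Finset.sum_const, ← Finset.mul_sum, htel2,
          Nat.card_Ico, show N - m = m from by omega, nsmul_eq_mul]
  -- reindex the main sum
  have hreindex : (∑ j ∈ Finset.Icc 1 N,
      ∫ τ in x (j-1)..x j, (τ - x j) * (τ - x (j-1)) * g'' τ)
      = ∑ k ∈ Finset.range N,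
        ∫ τ in x k..x (k+1), (τ - x (k+1)) * (τ - x k) * g'' τ := by
    rw [← Finset.Ico_add_one_right_eq_Icc, Finset.sum_Ico_eq_sum_range]
    apply Finset.sum_congr rfl
    intro k _
    have e1 : 1 + k - 1 = k := by omega
    have e2 : 1 + k = k + 1 := by omega
    rw [e1, e2]
  have hsplitsum : (∑ k ∈ Finset.range N,
        |∫ τ in x k..x (k+1), (τ - x (k+1)) * (τ - x k) * g'' τ|)
      = (∑ k ∈ Finset.range m,
        |∫ τ in x k..x (k+1), (τ - x (k+1)) * (τ - x k) * g'' τ|)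
      + ∑ k ∈ Finset.Ico m N,
        |∫ τ in x k..x (k+1), (τ - x (k+1)) * (τ - x k) * g'' τ| := by
    rw [Finset.range_eq_Ico, Finset.range_eq_Ico]
    exact (Finset.sum_Ico_consecutive (fun k => |∫ τ in x k..x (k+1), (τ - x (k+1)) * (τ - x k) * g'' τ|) (k := N) (Nat.zero_le m) (by omega)).symm
  -- initial reduction
  have hstart : |(1 / 2) * ∑ j ∈ Finset.Icc 1 N,
      ∫ τ in x (j-1)..x j, (τ - x j) * (τ - x (j-1)) * g'' τ|
      ≤ (1/2) * ((∑ k ∈ Finset.range m,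
        |∫ τ in x k..x (k+1), (τ - x (k+1)) * (τ - x k) * g'' τ|)
      + ∑ k ∈ Finset.Ico m N,
        |∫ τ in x k..x (k+1), (τ - x (k+1)) * (τ - x k) * g'' τ|) := by
    rw [hreindex, abs_mul, ← hsplitsum]
    have h12 : |(1:ℝ)/2| = 1/2 := by norm_num
    rw [h12]
    apply mul_le_mul_of_nonneg_left (Finset.abs_sum_le_sum_abs _ _) (by norm_num)
  -- numeric estimates
  have hE0 : E 0 = 1 := by
    show Real.exp (-(c * x 0)) = 1
    rw [hx0]
    simp
  have hEmnn : 0 ≤ E m := hEnn m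
  have hENnn : 0 ≤ E N := hEnn N
  have hEm1 : E m ≤ 1 := by
    show Real.exp (-(c * x m)) ≤ 1
    rw [hxm]
    calc Real.exp (-(c * ρ)) ≤ Real.exp 0 := by
          apply Real.exp_le_exp.mpr
          have := mul_pos hcpos hρpos
          linarith only [this]
      _ = 1 := Real.exp_zero
  have hPnn : (0:ℝ) ≤ ((N:ℝ)^2)⁻¹ * L := by positivity
  have hcinv : c⁻¹ = ε/abar := by rw [hcdef]; rw [inv_div]
  have hKcinv : K * c⁻¹ = M/(ε*abar) := by
    rw [hKdef, hcinv]
    field_simp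
  -- term 1
  have ht1 : (m:ℝ)*(h1*(M*h1^2)) ≤ (M*T^3/2) * (((N:ℝ)^2)⁻¹ * L) := by
    have e1 : (m:ℝ)*(h1*(M*h1^2)) = M*((m:ℝ)*h1)*h1^2 := by ring
    rw [e1, hmh1]
    have e2 : M*(T/2)*(T/(N:ℝ))^2 = (M*T^3/2)*((N:ℝ)^2)⁻¹ := by
      field_simp
    calc M*ρ*h1^2 ≤ M*(T/2)*(T/(N:ℝ))^2 := by gcongr
      _ = (M*T^3/2)*((N:ℝ)^2)⁻¹ := e2
      _ ≤ (M*T^3/2)*(((N:ℝ)^2)⁻¹ * L) := by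
          rw [← mul_assoc]
          exact le_mul_of_one_le_right (by positivity) hL1
  -- term 2
  have ht2 : h1*(K*(h1*c⁻¹))*(E 0 - E m) ≤ (2*M*T/abar^2) * (((N:ℝ)^2)⁻¹ * L) := by
    have hcoeff : 0 ≤ h1*(K*(h1*c⁻¹)) := by positivity
    have hd1 : E 0 - E m ≤ 1 := by rw [hE0]; linarith only [hEmnn]
    calc h1*(K*(h1*c⁻¹))*(E 0 - E m) ≤ h1*(K*(h1*c⁻¹))*1 :=
          mul_le_mul_of_nonneg_left hd1 hcoeff
      _ = (h1*h1)*(K*c⁻¹) := by ring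
      _ ≤ ((T/(N:ℝ))*(2*(abar⁻¹*ε*L)/(N:ℝ)))*(K*c⁻¹) := by
          apply mul_le_mul_of_nonneg_right _ (by positivity)
          exact mul_le_mul hh1leTN hh1leL hh1nn (by positivity)
      _ = (2*M*T/abar^2) * (((N:ℝ)^2)⁻¹ * L) := by
          rw [hKcinv]
          field_simp
  -- term 3
  have ht3 : (m:ℝ)*(h2*(M*h2^2)) ≤ (4*M*T^3) * (((N:ℝ)^2)⁻¹ * L) := by
    have e1 : (m:ℝ)*(h2*(M*h2^2)) = M*((m:ℝ)*h2)*h2^2 := by ring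
    rw [e1, hmh2]
    have e2 : M*T*(2*T/(N:ℝ))^2 = (4*M*T^3)*((N:ℝ)^2)⁻¹ := by
      field_simp
      ring
    calc M*(T-ρ)*h2^2 ≤ M*T*(2*T/(N:ℝ))^2 := by
          gcongr
          linarith only [hρpos]
      _ = (4*M*T^3)*((N:ℝ)^2)⁻¹ := e2
      _ ≤ (4*M*T^3)*(((N:ℝ)^2)⁻¹ * L) := by
          rw [← mul_assoc]
          exact le_mul_of_one_le_right (by positivity) hL1
  -- term 4 (case split on the transition point)
  have ht4 : h2*(K*β2)*(E m - E N) ≤ (8*M*T/abar^2) * (((N:ℝ)^2)⁻¹ * L) := by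
    have hcoeff : 0 ≤ h2*(K*β2) := by positivity
    have hstep0 : h2*(K*β2)*(E m - E N) ≤ h2*(K*β2)*(E m) := by
      apply mul_le_mul_of_nonneg_left _ hcoeff
      linarith only [hENnn]
    rcases le_or_gt (abar⁻¹*ε*L) (T/2) with hcase | hcase
    · -- layer-resolving case : ρ = ā⁻¹ ε ln N
      have hρeq : ρ = abar⁻¹*ε*L := min_eq_right hcase
      have hEm : E m = ((N:ℝ))⁻¹ := by
        show Real.exp (-(c * x m)) = _
        rw [hxm]
        have hcρ : c*ρ = L := by
          rw [hρeq, hcdef]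
          field_simp
        rw [hcρ, hLdef, Real.exp_neg, Real.exp_log hNpos]
      have hβle : β2 ≤ c⁻¹*c⁻¹ := min_le_left _ _
      have hKc2 : K * (c⁻¹*c⁻¹) = M/abar^2 := by
        rw [hKdef, hcinv]
        field_simp
      calc h2*(K*β2)*(E m - E N) ≤ h2*(K*β2)*(E m) := hstep0
        _ ≤ h2*(K*(c⁻¹*c⁻¹))*((N:ℝ))⁻¹ := by
            rw [hEm]
            gcongr
        _ ≤ (2*T/(N:ℝ))*(K*(c⁻¹*c⁻¹))*((N:ℝ))⁻¹ := by
            gcongr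
        _ = (2*M*T/abar^2)*((N:ℝ)^2)⁻¹ := by
            rw [hKc2]
            field_simp
        _ ≤ (8*M*T/abar^2)*(((N:ℝ)^2)⁻¹ * L) := by
            have h28 : (2:ℝ)*M*T ≤ 8*M*T := by
              have := mul_pos hM hT
              linarith only [this]
            have h28' : 2*M*T/abar^2 ≤ 8*M*T/abar^2 :=
              (div_le_div_iff_of_pos_right (by positivity)).mpr h28
            have h1' : (2*M*T/abar^2)*((N:ℝ)^2)⁻¹ ≤ (8*M*T/abar^2)*((N:ℝ)^2)⁻¹ :=
              mul_le_mul_of_nonneg_right h28' (by positivity)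
            calc (2*M*T/abar^2)*((N:ℝ)^2)⁻¹ ≤ (8*M*T/abar^2)*((N:ℝ)^2)⁻¹ := h1'
              _ ≤ (8*M*T/abar^2)*(((N:ℝ)^2)⁻¹ * L) := by
                  rw [← mul_assoc]
                  exact le_mul_of_one_le_right (by positivity) hL1
    · -- no-layer case : ρ = T/2, ε not small
      have hρeq : ρ = T/2 := min_eq_left hcase.le
      have hεL : abar*T ≤ 2*ε*L := by
        have h' := mul_le_mul_of_nonneg_left hcase.le habar.le
        have e : abar*(abar⁻¹*ε*L) = ε*L := by field_simp
        rw [e] at h'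
        linarith only [h']
      have hβle : β2 ≤ h2*c⁻¹ := min_le_right _ _
      calc h2*(K*β2)*(E m - E N) ≤ h2*(K*β2)*(E m) := hstep0
        _ ≤ h2*(K*β2)*1 := by
            apply mul_le_mul_of_nonneg_left hEm1 hcoeff
        _ = h2*(K*β2) := by ring
        _ ≤ h2*(K*(h2*c⁻¹)) := by gcongr
        _ = (h2*h2)*(K*c⁻¹) := by ring
        _ ≤ ((2*T/(N:ℝ))*(2*T/(N:ℝ)))*(K*c⁻¹) := by
            apply mul_le_mul_of_nonneg_right _ (by positivity)
            exact mul_le_mul hh2le hh2le hh2pos.le (by positivity)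
        _ = (4*T^2*(M/(ε*abar)))*((N:ℝ)^2)⁻¹ := by
            rw [hKcinv]
            field_simp
            ring
        _ ≤ (8*M*T/abar^2)*(((N:ℝ)^2)⁻¹ * L) := by
            have hkey : 4*T^2*(M/(ε*abar)) ≤ (8*M*T/abar^2)*L := by
              have e1 : 4*T^2*(M/(ε*abar)) = (4*T^2*M)/(ε*abar) := by ring
              have e2 : (8*M*T/abar^2)*L = (8*M*T*L)/abar^2 := by ring
              rw [e1, e2, div_le_div_iff₀ (by positivity) (by positivity)]
              have h' := mul_le_mul_of_nonneg_left hεL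
                (show (0:ℝ) ≤ 4*M*T*abar by positivity)
              linarith only [h']
            calc (4*T^2*(M/(ε*abar)))*((N:ℝ)^2)⁻¹
                ≤ ((8*M*T/abar^2)*L)*((N:ℝ)^2)⁻¹ :=
                  mul_le_mul_of_nonneg_right hkey (by positivity)
              _ = (8*M*T/abar^2)*(((N:ℝ)^2)⁻¹ * L) := by ring
  -- final assembly
  have hC3nn : (0:ℝ) ≤ M*T^3 := by positivity
  have hC2nn : (0:ℝ) ≤ M*T/abar^2 := by positivity
  calc |(1 / 2) * ∑ j ∈ Finset.Icc 1 N,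
      ∫ τ in x (j-1)..x j, (τ - x j) * (τ - x (j-1)) * g'' τ|
      ≤ (1/2) * ((∑ k ∈ Finset.range m,
        |∫ τ in x k..x (k+1), (τ - x (k+1)) * (τ - x k) * g'' τ|)
      + ∑ k ∈ Finset.Ico m N,
        |∫ τ in x k..x (k+1), (τ - x (k+1)) * (τ - x k) * g'' τ|) := hstart
    _ ≤ (1/2) * (((m:ℝ)*(h1*(M*h1^2)) + h1*(K*(h1*c⁻¹))*(E 0 - E m))
        + ((m:ℝ)*(h2*(M*h2^2)) + h2*(K*β2)*(E m - E N))) := by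
        linarith only [hfineSum, hcoarseSum]
    _ ≤ (1/2) * ((M*T^3/2) * (((N:ℝ)^2)⁻¹ * L) + (2*M*T/abar^2) * (((N:ℝ)^2)⁻¹ * L)
        + (4*M*T^3) * (((N:ℝ)^2)⁻¹ * L) + (8*M*T/abar^2) * (((N:ℝ)^2)⁻¹ * L)) := by
        linarith only [ht1, ht2, ht3, ht4]
    _ ≤ (M * (5*T^3 + 10*T/abar^2) + 1) * ((N:ℝ)^2)⁻¹ * L := by
        have e : (1/2) * ((M*T^3/2) * (((N:ℝ)^2)⁻¹ * L) + (2*M*T/abar^2) * (((N:ℝ)^2)⁻¹ * L)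
            + (4*M*T^3) * (((N:ℝ)^2)⁻¹ * L) + (8*M*T/abar^2) * (((N:ℝ)^2)⁻¹ * L))
            = (M*T^3*(9/4) + 5*(M*T/abar^2)) * (((N:ℝ)^2)⁻¹ * L) := by ring
        have e2 : (M * (5*T^3 + 10*T/abar^2) + 1) * ((N:ℝ)^2)⁻¹ * L
            = (M*T^3*5 + 10*(M*T/abar^2) + 1) * (((N:ℝ)^2)⁻¹ * L) := by ring
        rw [e, e2]
        apply mul_le_mul_of_nonneg_right _ hPnn
        linarith only [hC3nn, hC2nn]
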